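/- Let D be an integral domain with quotient field K and X an indeterminate over K. Then D is condensed if and only if D + XK[X] is condensed. -/

import Mathlib

/-- An integral domain is condensed if for every pair of nonzero ideals `I, J`,
the product `I*J` equals the set of products `{i*j : i ∈ I, j ∈ J}`. -/
def IsCondensed (D : Type*) [CommRing D] : Prop :=
  ∀ I J : Ideal D, I ≠ ⊥ → J ≠ ⊥ → ∀ x ∈ I * J, ∃ i ∈ I, ∃ j ∈ J, x = i * j

/-- The ring `A + X·B[X]`: polynomials over `B` whose constant coefficient lies
in the subring `A`. -/
def constSubring {B : Type*} [CommRing B] (A : Subring B) : Subring (Polynomial B) where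
  carrier := {f | f.coeff 0 ∈ A}
  zero_mem' := by simpa using zero_mem A
  one_mem' := by simpa using one_mem A
  add_mem' := by
    intro f g hf hg
    simpa using add_mem hf hg
  neg_mem' := by
    intro f hf
    simpa using A.neg_mem hf
  mul_mem' := by
    intro f g hf hg
    simpa [Polynomial.mul_coeff_zero] using mul_mem hf hg

/-- `D + X·K[X]` where `K` is the quotient field of `D`. -/
noncomputable def DplusXKX (D : Type*) [CommRing D] [IsDomain D] :
    Subring (Polynomial (FractionRing D)) :=
  constSubring (algebraMap D (FractionRing D)).range

open Polynomial

open Polynomial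

set_option synthInstance.maxHeartbeats 1000000
set_option maxHeartbeats 2000000
set_option linter.unusedSectionVars false

section Aux

variable {D : Type*} [CommRing D] [IsDomain D]

local notation "K" => FractionRing D

lemma mem_DplusXKX_iff {f : Polynomial K} :
    f ∈ DplusXKX D ↔ f.coeff 0 ∈ (algebraMap D K).range := Iff.rfl

lemma X_mul_mem (k : Polynomial K) : X * k ∈ DplusXKX D := by
  rw [mem_DplusXKX_iff]
  simp [mul_coeff_zero]

lemma C_alg_mem (d : D) : C (algebraMap D K d) ∈ DplusXKX D := by
  rw [mem_DplusXKX_iff]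
  simp

variable (D) in
/-- The natural embedding `D →+* D + XK[X]`. -/
noncomputable def phi : D →+* DplusXKX D where
  toFun d := ⟨C (algebraMap D K d), C_alg_mem d⟩
  map_one' := Subtype.ext <| by simp
  map_mul' x y := Subtype.ext <| by push_cast ; simp
  map_zero' := Subtype.ext <| by simp
  map_add' x y := Subtype.ext <| by push_cast ; simp

lemma phi_injective : Function.Injective (phi D) := by
  intro a b h
  have : (C (algebraMap D K a) : Polynomial K) = C (algebraMap D K b) := congrArg Subtype.val h
  have := C_injective.eq_iff.mp this
  exact IsFractionRing.injective D K this

lemma coeff0_of_mem_map (I : Ideal D) (f : DplusXKX D) (hf : f ∈ I.map (phi D)) :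
    ∃ i ∈ I, (f : Polynomial K).coeff 0 = algebraMap D K i := by
  rw [Ideal.map, Ideal.span] at hf
  refine Submodule.span_induction ?_ ?_ ?_ ?_ hf
  · rintro x ⟨i, hi, rfl⟩
    exact ⟨i, hi, by simp [phi]⟩
  · exact ⟨0, I.zero_mem, by simp⟩
  · rintro x y - - ⟨i, hi, hx⟩ ⟨j, hj, hy⟩
    exact ⟨i + j, I.add_mem hi hj, by push_cast; simp [hx, hy]⟩
  · rintro r x - ⟨i, hi, hx⟩
    obtain ⟨d, hd⟩ := (mem_DplusXKX_iff.mp r.2)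
    refine ⟨d * i, I.mul_mem_left d hi, ?_⟩
    have : ((r • x : DplusXKX D) : Polynomial K) = (r : Polynomial K) * (x : Polynomial K) := rfl
    rw [this, mul_coeff_zero, hx, ← hd, map_mul]

lemma backward (hR : IsCondensed (DplusXKX D)) : IsCondensed D := by
  intro I J hI hJ x hx
  have hImap : I.map (phi D) ≠ ⊥ := by
    obtain ⟨y, hy, hy0⟩ := (Submodule.ne_bot_iff I).mp hI
    refine (Submodule.ne_bot_iff _).mpr ⟨phi D y, Ideal.mem_map_of_mem _ hy, ?_⟩
    simpa using fun h => hy0 (phi_injective (h.trans (map_zero (phi D)).symm))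
  have hJmap : J.map (phi D) ≠ ⊥ := by
    obtain ⟨y, hy, hy0⟩ := (Submodule.ne_bot_iff J).mp hJ
    refine (Submodule.ne_bot_iff _).mpr ⟨phi D y, Ideal.mem_map_of_mem _ hy, ?_⟩
    simpa using fun h => hy0 (phi_injective (h.trans (map_zero (phi D)).symm))
  have hx' : phi D x ∈ I.map (phi D) * J.map (phi D) := by
    rw [← Ideal.map_mul]
    exact Ideal.mem_map_of_mem _ hx
  obtain ⟨f, hf, g, hg, hfg⟩ := hR _ _ hImap hJmap _ hx'
  obtain ⟨i, hi, hif⟩ := coeff0_of_mem_map I f hf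
  obtain ⟨j, hj, hjg⟩ := coeff0_of_mem_map J g hg
  refine ⟨i, hi, j, hj, IsFractionRing.injective D K ?_⟩
  have h0 : ((phi D x : DplusXKX D) : Polynomial K).coeff 0
      = ((f * g : DplusXKX D) : Polynomial K).coeff 0 := by rw [hfg]
  have : (algebraMap D K x) = ((f : Polynomial K) * (g : Polynomial K)).coeff 0 := by
    simpa [phi] using h0
  rw [this, mul_coeff_zero, hif, hjg, ← map_mul]

lemma list_repr {V W : Submodule D K} {u : K} (hu : u ∈ V * W) :
    ∃ l : List (K × K), (∀ p ∈ l, p.1 ∈ V ∧ p.2 ∈ W) ∧ (l.map fun p => p.1 * p.2).sum = u := by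
  refine Submodule.mul_induction_on hu ?_ ?_
  · intro m hm n hn
    exact ⟨[(m, n)], by simp [hm, hn], by simp⟩
  · rintro x y ⟨l1, h1, s1⟩ ⟨l2, h2, s2⟩
    refine ⟨l1 ++ l2, ?_, by simp [s1, s2]⟩
    intro p hp
    rcases List.mem_append.mp hp with h | h
    exacts [h1 p h, h2 p h]

lemma exists_denom (l : List K) :
    ∃ d : D, d ≠ 0 ∧ ∀ c ∈ l, ∃ a : D, algebraMap D K a = algebraMap D K d * c := by
  induction l with
  | nil => exact ⟨1, one_ne_zero, by simp⟩
  | cons c l ih =>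
    obtain ⟨d, hd, hl⟩ := ih
    obtain ⟨⟨a, d₀⟩, h⟩ := IsLocalization.surj (nonZeroDivisors D) c
    refine ⟨d * d₀, mul_ne_zero hd (nonZeroDivisors.ne_zero d₀.2), ?_⟩
    intro c' hc'
    rcases List.mem_cons.mp hc' with rfl | hc'
    · refine ⟨d * a, ?_⟩
      rw [map_mul, map_mul, ← h]
      ring
    · obtain ⟨a', ha'⟩ := hl c' hc'
      refine ⟨d₀ * a', ?_⟩
      rw [map_mul, map_mul, ha']
      ring

lemma build_x (V W : Submodule D K) (d e : D) (I J : Ideal D)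
    (hI : ∀ a : D, (∃ v ∈ V, algebraMap D K d * v = algebraMap D K a) → a ∈ I)
    (hJ : ∀ b : D, (∃ w ∈ W, algebraMap D K e * w = algebraMap D K b) → b ∈ J) :
    ∀ l : List (K × K), (∀ p ∈ l, p.1 ∈ V ∧ p.2 ∈ W) →
      (∀ p ∈ l, ∃ a : D, algebraMap D K a = algebraMap D K d * p.1) →
      (∀ p ∈ l, ∃ b : D, algebraMap D K b = algebraMap D K e * p.2) →
      ∃ x ∈ I * J, algebraMap D K x = algebraMap D K (d * e) * (l.map fun p => p.1 * p.2).sum := by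
  intro l
  induction l with
  | nil => exact fun _ _ _ => ⟨0, (I * J).zero_mem, by simp⟩
  | cons p l ih =>
    intro hmem hda heb
    obtain ⟨x, hx, hxval⟩ := ih (fun q hq => hmem q (List.mem_cons_of_mem p hq))
      (fun q hq => hda q (List.mem_cons_of_mem p hq)) (fun q hq => heb q (List.mem_cons_of_mem p hq))
    obtain ⟨a, ha⟩ := hda p (List.mem_cons_self)
    obtain ⟨b, hb⟩ := heb p (List.mem_cons_self)
    have haI : a ∈ I := hI a ⟨p.1, (hmem p (List.mem_cons_self)).1, ha.symm⟩
    have hbJ : b ∈ J := hJ b ⟨p.2, (hmem p (List.mem_cons_self)).2, hb.symm⟩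
    refine ⟨a * b + x, (I * J).add_mem (Ideal.mul_mem_mul haI hbJ) hx, ?_⟩
    rw [map_add, map_mul, ha, hb, hxval, List.map_cons, List.sum_cons, map_mul]
    ring

lemma mod_cond (hD : IsCondensed D) (V W : Submodule D K) (u : K) (hu : u ∈ V * W) :
    ∃ v ∈ V, ∃ w ∈ W, u = v * w := by
  by_cases hu0 : u = 0
  · exact ⟨0, V.zero_mem, 0, W.zero_mem, by simp [hu0]⟩
  obtain ⟨l, hl, hsum⟩ := list_repr hu
  obtain ⟨d, hd, hdl⟩ := exists_denom (D := D) (l.map Prod.fst)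
  obtain ⟨e, he, hel⟩ := exists_denom (D := D) (l.map Prod.snd)
  set μd : K →ₗ[D] K := LinearMap.lsmul D K d with hμd
  set μe : K →ₗ[D] K := LinearMap.lsmul D K e with hμe
  set I : Ideal D := Submodule.comap (Algebra.linearMap D K) (V.map μd) with hIdef
  set J : Ideal D := Submodule.comap (Algebra.linearMap D K) (W.map μe) with hJdef
  have hIm : ∀ a : D, (∃ v ∈ V, algebraMap D K d * v = algebraMap D K a) → a ∈ I := by
    rintro a ⟨v, hv, hva⟩
    refine Submodule.mem_comap.mpr (Submodule.mem_map.mpr ⟨v, hv, ?_⟩)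
    simp [hμd, Algebra.smul_def, hva]
  have hJm : ∀ b : D, (∃ w ∈ W, algebraMap D K e * w = algebraMap D K b) → b ∈ J := by
    rintro b ⟨w, hw, hwb⟩
    refine Submodule.mem_comap.mpr (Submodule.mem_map.mpr ⟨w, hw, ?_⟩)
    simp [hμe, Algebra.smul_def, hwb]
  obtain ⟨x, hxIJ, hxval⟩ := build_x V W d e I J hIm hJm l hl
    (fun p hp => hdl p.1 (List.mem_map_of_mem hp)) (fun p hp => hel p.2 (List.mem_map_of_mem hp))
  rw [hsum] at hxval
  have halgde : algebraMap D K (d * e) ≠ 0 :=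
    (map_ne_zero_iff _ (IsFractionRing.injective D K)).mpr (mul_ne_zero hd he)
  have hx0 : x ≠ 0 := by
    intro h
    rw [h, map_zero] at hxval
    exact hu0 (by
      rcases mul_eq_zero.mp hxval.symm with h' | h'
      · exact absurd h' halgde
      · exact h')
  have hI0 : I ≠ ⊥ := (Submodule.ne_bot_iff I).mpr ⟨x, Ideal.mul_le_left hxIJ, hx0⟩
  have hJ0 : J ≠ ⊥ := (Submodule.ne_bot_iff J).mpr ⟨x, Ideal.mul_le_right hxIJ, hx0⟩
  obtain ⟨i, hi, j, hj, hxij⟩ := hD I J hI0 hJ0 x hxIJ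
  obtain ⟨v₀, hv₀, hdv⟩ := Submodule.mem_map.mp (Submodule.mem_comap.mp hi)
  obtain ⟨w₀, hw₀, hew⟩ := Submodule.mem_map.mp (Submodule.mem_comap.mp hj)
  refine ⟨v₀, hv₀, w₀, hw₀, ?_⟩
  have h1 : algebraMap D K (d * e) * u = algebraMap D K (d * e) * (v₀ * w₀) := by
    rw [hxval.symm, hxij, map_mul]
    have hdv' : algebraMap D K d * v₀ = algebraMap D K i := by
      simpa [hμd, Algebra.smul_def] using hdv
    have hew' : algebraMap D K e * w₀ = algebraMap D K j := by
      simpa [hμe, Algebra.smul_def] using hew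
    rw [← hdv', ← hew', map_mul]
    ring
  exact mul_left_cancel₀ halgde h1

/-- The biggest `K[X]`-ideal inside `A`. -/
noncomputable def AK (A : Ideal (DplusXKX D)) : Ideal (Polynomial K) :=
  Ideal.span {g | ∃ f ∈ A, g = X * (f : Polynomial K)}

lemma AK_mul_mem (A : Ideal (DplusXKX D)) :
    ∀ g ∈ AK A, ∀ k : Polynomial K, ∃ f ∈ A, (f : Polynomial K) = k * g := by
  intro g hg
  refine Submodule.span_induction ?_ ?_ ?_ ?_ hg
  · rintro g ⟨f, hf, rfl⟩ k
    refine ⟨⟨X * k, X_mul_mem k⟩ * f, A.mul_mem_left _ hf, ?_⟩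
    push_cast
    ring
  · exact fun k => ⟨0, A.zero_mem, by simp⟩
  · rintro x y - - hx hy k
    obtain ⟨f1, h1, e1⟩ := hx k
    obtain ⟨f2, h2, e2⟩ := hy k
    exact ⟨f1 + f2, A.add_mem h1 h2, by push_cast [e1, e2]; ring⟩
  · rintro a x - hx k
    obtain ⟨f, hf, ef⟩ := hx (k * a)
    exact ⟨f, hf, by rw [ef, smul_eq_mul]; ring⟩

lemma AK_ne_bot {A : Ideal (DplusXKX D)} (hA : A ≠ ⊥) : AK A ≠ ⊥ := by
  obtain ⟨f, hf, hf0⟩ := (Submodule.ne_bot_iff A).mp hA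
  refine (Submodule.ne_bot_iff _).mpr ⟨X * (f : Polynomial K), ?_, ?_⟩
  · exact Ideal.subset_span ⟨f, hf, rfl⟩
  · exact mul_ne_zero X_ne_zero (by simpa using hf0)

/-- The submodule of "constant coefficients at level s" of an ideal. -/
noncomputable def Vmod (A : Ideal (DplusXKX D)) (s : Polynomial K) : Submodule D K where
  carrier := {c | ∃ f ∈ A, (f : Polynomial K) = s * C c}
  zero_mem' := ⟨0, A.zero_mem, by simp⟩
  add_mem' := by
    rintro c c' ⟨f, hf, ef⟩ ⟨f', hf', ef'⟩
    exact ⟨f + f', A.add_mem hf hf', by push_cast [ef, ef']; rw [C_add]; ring⟩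
  smul_mem' := by
    rintro d c ⟨f, hf, ef⟩
    refine ⟨⟨C (algebraMap D K d), C_alg_mem d⟩ * f, A.mul_mem_left _ hf, ?_⟩
    push_cast [ef]
    rw [Algebra.smul_def, C_mul]
    ring

lemma poly_decomp (g : Polynomial K) : g = C (g.coeff 0) + X * g.divX := by
  rw [add_comm]
  exact (X_mul_divX_add g).symm

lemma struct (A : Ideal (DplusXKX D)) (hA : A ≠ ⊥) :
    ∃ s : Polynomial K, s ≠ 0 ∧ ∃ V : Submodule D K,
      (∀ f : DplusXKX D, f ∈ A →
        ∃ c ∈ V, ∃ q : Polynomial K, (f : Polynomial K) = s * (C c + X * q)) ∧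
      (∀ c ∈ V, ∀ q : Polynomial K, ∃ f ∈ A, (f : Polynomial K) = s * (C c + X * q)) := by
  obtain ⟨p₀, hp₀⟩ := (IsPrincipalIdealRing.principal (AK A)).principal
  have hp₀' : AK A = Ideal.span {p₀} := hp₀
  have hp₀0 : p₀ ≠ 0 := by
    rintro rfl
    exact AK_ne_bot hA (by rw [hp₀']; exact Ideal.span_singleton_eq_bot.mpr rfl)
  have hdvd : ∀ f : DplusXKX D, f ∈ A → p₀ ∣ X * (f : Polynomial K) := by
    intro f hf
    rw [← Ideal.mem_span_singleton, ← hp₀']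
    exact Ideal.subset_span ⟨f, hf, rfl⟩
  have hp₀mem : p₀ ∈ AK A := by rw [hp₀']; exact Ideal.subset_span rfl
  by_cases hX : X ∣ p₀
  · obtain ⟨s, rfl⟩ := hX
    have hs : s ≠ 0 := fun h => hp₀0 (by rw [h, mul_zero])
    refine ⟨s, hs, Vmod A s, ?_, ?_⟩
    · -- forward direction
      intro f hf
      obtain ⟨g, hg⟩ := hdvd f hf
      rw [mul_assoc] at hg
      have hfg : (f : Polynomial K) = s * g := mul_left_cancel₀ X_ne_zero hg
      obtain ⟨f₂, hf₂, ef₂⟩ := AK_mul_mem A _ hp₀mem g.divX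
      refine ⟨g.coeff 0, ⟨f - f₂, A.sub_mem hf hf₂, ?_⟩, g.divX, ?_⟩
      · push_cast [hfg, ef₂]
        linear_combination (-s) * (X_mul_divX_add g)
      · conv_lhs => rw [hfg, poly_decomp g]
    · -- backward direction
      rintro c ⟨f₁, hf₁, ef₁⟩ q
      obtain ⟨f₂, hf₂, ef₂⟩ := AK_mul_mem A _ hp₀mem q
      exact ⟨f₁ + f₂, A.add_mem hf₁ hf₂, by push_cast [ef₁, ef₂]; ring⟩
  · refine ⟨p₀, hp₀0, ⊤, ?_, ?_⟩
    · intro f hf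
      obtain ⟨g, hg⟩ := hdvd f hf
      have hXg : X ∣ g := by
        rcases (prime_X (R := K)).2.2 p₀ g ⟨(f : Polynomial K), by rw [← hg]⟩ with h | h
        · exact absurd h hX
        · exact h
      obtain ⟨g₃, rfl⟩ := hXg
      have hfg : (f : Polynomial K) = p₀ * g₃ := by
        apply mul_left_cancel₀ (X_ne_zero (R := K))
        rw [hg]; ring
      refine ⟨g₃.coeff 0, trivial, g₃.divX, ?_⟩
      conv_lhs => rw [hfg, poly_decomp g₃]
    · intro c _ q
      obtain ⟨f, hf, ef⟩ := AK_mul_mem A _ hp₀mem (C c + X * q)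
      exact ⟨f, hf, by rw [ef]; ring⟩

lemma forward (hD : IsCondensed D) : IsCondensed (DplusXKX D) := by
  intro A B hA hB h hh
  obtain ⟨s, hs, V, hAf, hAb⟩ := struct A hA
  obtain ⟨t, ht, W, hBf, hBb⟩ := struct B hB
  have key : ∃ u ∈ V * W, ∃ k : Polynomial K,
      (h : Polynomial K) = s * t * (C u + X * k) ∧ (V = ⊥ → W = ⊥ → X ∣ k) := by
    refine Submodule.mul_induction_on hh ?_ ?_
    · intro f hf g hg
      obtain ⟨v, hv, q1, e1⟩ := hAf f hf
      obtain ⟨w, hw, q2, e2⟩ := hBf g hg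
      refine ⟨v * w, Submodule.mul_mem_mul hv hw,
        C v * q2 + C w * q1 + X * q1 * q2, ?_, ?_⟩
      · push_cast [e1, e2]
        rw [C_mul]
        ring
      · intro hV hW
        have hv0 : v = 0 := by rw [hV] at hv; simpa using hv
        have hw0 : w = 0 := by rw [hW] at hw; simpa using hw
        rw [hv0, hw0]
        simp only [map_zero, zero_mul, zero_add, add_zero]
        exact ⟨q1 * q2, by ring⟩
    · rintro x y ⟨u1, hu1, k1, e1, d1⟩ ⟨u2, hu2, k2, e2, d2⟩
      refine ⟨u1 + u2, Submodule.add_mem _ hu1 hu2, k1 + k2, ?_,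
        fun hV hW => dvd_add (d1 hV hW) (d2 hV hW)⟩
      push_cast [e1, e2]
      rw [C_add]
      ring
  obtain ⟨u, hu, k, he, hdvd⟩ := key
  by_cases hu0 : u = 0
  · by_cases hWb : W = ⊥
    · by_cases hVb : V = ⊥
      · obtain ⟨k₁, rfl⟩ := hdvd hVb hWb
        obtain ⟨f, hf, ef⟩ := hAb 0 V.zero_mem 1
        obtain ⟨g, hg, eg⟩ := hBb 0 W.zero_mem k₁
        refine ⟨f, hf, g, hg, Subtype.ext ?_⟩
        push_cast [ef, eg, he, hu0, C_0]
        ring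
      · obtain ⟨v, hv, hv0⟩ := (Submodule.ne_bot_iff V).mp hVb
        obtain ⟨f, hf, ef⟩ := hAb v hv 0
        obtain ⟨g, hg, eg⟩ := hBb 0 W.zero_mem (C v⁻¹ * k)
        refine ⟨f, hf, g, hg, Subtype.ext ?_⟩
        push_cast [ef, eg, he, hu0, C_0]
        have hc : (C v : Polynomial K) * C v⁻¹ = 1 := by
          rw [← C_mul, mul_inv_cancel₀ hv0, C_1]
        linear_combination (-(s * t * X * k)) * hc
    · obtain ⟨w, hw, hw0⟩ := (Submodule.ne_bot_iff W).mp hWb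
      obtain ⟨f, hf, ef⟩ := hAb 0 V.zero_mem (C w⁻¹ * k)
      obtain ⟨g, hg, eg⟩ := hBb w hw 0
      refine ⟨f, hf, g, hg, Subtype.ext ?_⟩
      push_cast [ef, eg, he, hu0, C_0]
      have hc : (C w : Polynomial K) * C w⁻¹ = 1 := by
        rw [← C_mul, mul_inv_cancel₀ hw0, C_1]
      linear_combination (-(s * t * X * k)) * hc
  · obtain ⟨v, hv, w, hw, huvw⟩ := mod_cond hD V W u hu
    have hv0 : v ≠ 0 := fun h0 => hu0 (by rw [huvw, h0, zero_mul])
    obtain ⟨f, hf, ef⟩ := hAb v hv 0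
    obtain ⟨g, hg, eg⟩ := hBb w hw (C v⁻¹ * k)
    refine ⟨f, hf, g, hg, Subtype.ext ?_⟩
    push_cast [ef, eg, he, huvw, C_0]
    have hc : (C v : Polynomial K) * C v⁻¹ = 1 := by
      rw [← C_mul, mul_inv_cancel₀ hv0, C_1]
    rw [C_mul]
    linear_combination (-(s * t * X * k)) * hc

end Aux

theorem stmt16 (D : Type*) [CommRing D] [IsDomain D] :
    IsCondensed D ↔ IsCondensed (DplusXKX D) := by
  constructor
  · exact forward
  · exact backward
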